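/- Let N, M ≥ 1, let Ξ, Λ ∈ M_N(ℂ) be constant matrices with no common eigenvalue and Ξ invertible, and let η: ℝ² → ℂ^{N×M}, θ: ℝ² → ℂ^{M×N}, Ω: ℝ² → M_N(ℂ), A: ℝ² → M_M(ℂ), J⁰: ℝ² → M_M(ℂ), K⁰: ℝ² → M_M(ℂ) be differentiable functions of (τ, σ) with Ω and J⁰ pointwise invertible, such that at every point: −(∂_σ J⁰)·(J⁰)⁻¹ = A = ∂_τ K⁰; Ξ·Ω − Ω·Λ = η·θ; ∂_σ η = Ξ·(∂_τ η) + η·A; and ∂_σ θ = (∂_τ θ)·Λ − A·θ. Then J := (I_M − θ·Ω⁻¹·Ξ⁻¹·η)·J⁰ and K := θ·Ω⁻¹·η + K⁰ satisfy the ASDYM gauge-potential compatibility relation ∂_σ J = −(∂_τ K)·J. -/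

import Mathlib

noncomputable section

open Polynomial

/-! ### Auxiliary lemmas: Sylvester-operator injectivity -/

lemma root_charpoly_mem_spectrum {n : Type*} [Fintype n] [DecidableEq n]
    (Λ : Matrix n n ℂ) (μ : ℂ) (h : (Matrix.charpoly Λ).IsRoot μ) :
    μ ∈ spectrum ℂ Λ := by
  rw [spectrum.mem_iff]
  intro hu
  have hdet : IsUnit (algebraMap ℂ (Matrix n n ℂ) μ - Λ).det :=
    (Matrix.isUnit_iff_isUnit_det _).mp hu
  have heval : (Matrix.charpoly Λ).eval μ = (algebraMap ℂ (Matrix n n ℂ) μ - Λ).det := by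
    rw [Matrix.charpoly, _root_.eval_det, Matrix.matPolyEquiv_charmatrix]
    congr 1
    rw [Polynomial.eval_sub, Polynomial.eval_X, Polynomial.eval_C]
    ext i j
    simp [Matrix.scalar_apply, Matrix.algebraMap_eq_diagonal, Matrix.diagonal_apply,
      Pi.algebraMap_apply]
  rw [Polynomial.IsRoot] at h
  rw [h] at heval
  exact (isUnit_iff_ne_zero.mp hdet) heval.symm

lemma sylvester_eq_zero {n : Type*} [Fintype n] [DecidableEq n]
    (Ξ Λ : Matrix n n ℂ) (hΞΛ : spectrum ℂ Ξ ∩ spectrum ℂ Λ = ∅)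
    (Y : Matrix n n ℂ) (hY : Ξ * Y = Y * Λ) : Y = 0 := by
  have hpow : ∀ k : ℕ, Ξ ^ k * Y = Y * Λ ^ k := by
    intro k
    induction k with
    | zero => simp
    | succ k ih =>
      rw [pow_succ, pow_succ, mul_assoc, hY, ← mul_assoc, ih, mul_assoc]
  have hcomm : ∀ p : ℂ[X], (Polynomial.aeval Ξ p) * Y = Y * Polynomial.aeval Λ p := by
    intro p
    induction p using Polynomial.induction_on' with
    | add p q hp hq => rw [map_add, map_add, add_mul, mul_add, hp, hq]
    | monomial k a =>
      rw [Polynomial.aeval_monomial, Polynomial.aeval_monomial, mul_assoc, hpow k,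
        ← mul_assoc, Algebra.commutes, mul_assoc]
  set p := Matrix.charpoly Λ with hp
  have h0 : (Polynomial.aeval Ξ p) * Y = 0 := by
    rw [hcomm, Matrix.aeval_self_charpoly, mul_zero]
  have hmonic : p.Monic := Matrix.charpoly_monic Λ
  have hsplits : p.Splits := IsAlgClosed.splits p
  have hfact : p = (p.roots.map fun a => X - C a).prod :=
    hsplits.eq_prod_roots_of_monic hmonic
  have hunit : IsUnit (Polynomial.aeval Ξ p) := by
    have hlp : ((p.roots.map fun a => X - C a).toList).prod = p := by
      rw [Multiset.prod_toList, ← hfact]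
    rw [← hlp, map_list_prod]
    apply List.prod_isUnit
    intro x hx
    obtain ⟨q, hq, rfl⟩ := List.mem_map.mp hx
    obtain ⟨μ, hμ, rfl⟩ := Multiset.mem_map.mp (Multiset.mem_toList.mp hq)
    have hfac : (Polynomial.aeval Ξ) (X - C μ) = Ξ - algebraMap ℂ (Matrix n n ℂ) μ := by
      rw [map_sub, Polynomial.aeval_X, Polynomial.aeval_C]
    rw [hfac]
    have hμΛ : μ ∈ spectrum ℂ Λ :=
      root_charpoly_mem_spectrum Λ μ (Polynomial.isRoot_of_mem_roots hμ)
    have hμΞ : μ ∉ spectrum ℂ Ξ := by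
      intro hc
      rw [Set.eq_empty_iff_forall_notMem] at hΞΛ
      exact hΞΛ μ ⟨hc, hμΛ⟩
    have hne := spectrum.notMem_iff.mp hμΞ
    simpa [neg_sub] using hne.neg
  calc Y = ↑hunit.unit⁻¹ * ((Polynomial.aeval Ξ p) * Y) := by
        rw [← mul_assoc, IsUnit.val_inv_mul, one_mul]
    _ = 0 := by rw [h0, mul_zero]

/-- Entrywise partial derivative in the first coordinate `τ` of `ℝ²`. -/
def pdτ {a b : Type*} (f : ℝ × ℝ → Matrix a b ℂ) (p : ℝ × ℝ) : Matrix a b ℂ :=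
  Matrix.of fun i j => deriv (fun s => f (s, p.2) i j) p.1

/-- Entrywise partial derivative in the second coordinate `σ` of `ℝ²`. -/
def pdσ {a b : Type*} (f : ℝ × ℝ → Matrix a b ℂ) (p : ℝ × ℝ) : Matrix a b ℂ :=
  Matrix.of fun i j => deriv (fun s => f (p.1, s) i j) p.2

/-! ### Auxiliary lemmas: entrywise calculus for matrix-valued functions -/

section MD

variable {α β γ : Type*}

/-- Entrywise derivative of a one-variable matrix-valued function. -/
def mD (F : ℝ → Matrix α β ℂ) (t : ℝ) : Matrix α β ℂ :=
  Matrix.of fun i j => deriv (fun s => F s i j) t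

lemma mD_const (C : Matrix α β ℂ) (t : ℝ) : mD (fun _ => C) t = 0 := by
  ext i j
  simp [mD]

lemma mD_sub {F G : ℝ → Matrix α β ℂ} {t : ℝ}
    (hF : ∀ i j, Differentiable ℝ fun s => F s i j)
    (hG : ∀ i j, Differentiable ℝ fun s => G s i j) :
    mD (fun s => F s - G s) t = mD F t - mD G t := by
  ext i j
  simp only [mD, Matrix.of_apply, Matrix.sub_apply]
  exact deriv_sub (hF i j t) (hG i j t)

lemma mD_add {F G : ℝ → Matrix α β ℂ} {t : ℝ}
    (hF : ∀ i j, Differentiable ℝ fun s => F s i j)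
    (hG : ∀ i j, Differentiable ℝ fun s => G s i j) :
    mD (fun s => F s + G s) t = mD F t + mD G t := by
  ext i j
  simp only [mD, Matrix.of_apply, Matrix.add_apply]
  exact deriv_add (hF i j t) (hG i j t)

lemma mD_mul [Fintype β] {F : ℝ → Matrix α β ℂ} {G : ℝ → Matrix β γ ℂ} {t : ℝ}
    (hF : ∀ i j, Differentiable ℝ fun s => F s i j)
    (hG : ∀ i j, Differentiable ℝ fun s => G s i j) :
    mD (fun s => F s * G s) t = mD F t * G t + F t * mD G t := by
  ext i j
  simp only [mD, Matrix.of_apply, Matrix.add_apply, Matrix.mul_apply]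
  rw [deriv_fun_sum (fun k _ => ((hF i k t).fun_mul (hG k j t)))]
  rw [← Finset.sum_add_distrib]
  refine Finset.sum_congr rfl fun k _ => ?_
  rw [deriv_fun_mul (hF i k t) (hG k j t)]

lemma diff1_mul [Fintype β] {F : ℝ → Matrix α β ℂ} {G : ℝ → Matrix β γ ℂ}
    (hF : ∀ i j, Differentiable ℝ fun s => F s i j)
    (hG : ∀ i j, Differentiable ℝ fun s => G s i j) :
    ∀ i j, Differentiable ℝ fun s => (F s * G s) i j := by
  intro i j
  simp only [Matrix.mul_apply]
  exact Differentiable.fun_sum fun k _ => (hF i k).mul (hG k j)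

lemma diff1_sub {F G : ℝ → Matrix α β ℂ}
    (hF : ∀ i j, Differentiable ℝ fun s => F s i j)
    (hG : ∀ i j, Differentiable ℝ fun s => G s i j) :
    ∀ i j, Differentiable ℝ fun s => (F s - G s) i j := by
  intro i j
  simp only [Matrix.sub_apply]
  exact (hF i j).sub (hG i j)

lemma diff1_add {F G : ℝ → Matrix α β ℂ}
    (hF : ∀ i j, Differentiable ℝ fun s => F s i j)
    (hG : ∀ i j, Differentiable ℝ fun s => G s i j) :
    ∀ i j, Differentiable ℝ fun s => (F s + G s) i j := by
  intro i j
  simp only [Matrix.add_apply]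
  exact (hF i j).add (hG i j)

lemma diff1_const (C : Matrix α β ℂ) : ∀ i j, Differentiable ℝ fun _ : ℝ => C i j :=
  fun _ _ => differentiable_const _

lemma diff1_det {n : Type*} [Fintype n] [DecidableEq n] {F : ℝ → Matrix n n ℂ}
    (hF : ∀ i j, Differentiable ℝ fun s => F s i j) :
    Differentiable ℝ fun s => (F s).det := by
  simp only [Matrix.det_apply]
  refine Differentiable.fun_sum fun σ _ => ?_
  have h : (fun s => Equiv.Perm.sign σ • ∏ i, F s (σ i) i)
      = fun s => ((Equiv.Perm.sign σ : ℤ) : ℂ) * ∏ i, F s (σ i) i := by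
    funext s
    simp [Units.smul_def, zsmul_eq_mul]
  rw [h]
  exact (Differentiable.fun_finset_prod fun i _ => hF (σ i) i).const_mul _

lemma diff1_inv {n : Type*} [Fintype n] [DecidableEq n] {F : ℝ → Matrix n n ℂ}
    (hF : ∀ i j, Differentiable ℝ fun s => F s i j) (hu : ∀ s, IsUnit (F s)) :
    ∀ i j, Differentiable ℝ fun s => (F s)⁻¹ i j := by
  intro i j
  have h : (fun s => (F s)⁻¹ i j) = fun s => ((F s).det)⁻¹ * (F s).adjugate i j := by
    funext s
    rw [Matrix.inv_def, Matrix.smul_apply, Ring.inverse_eq_inv', smul_eq_mul]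
  rw [h]
  have hdet : ∀ s, (F s).det ≠ 0 := fun s =>
    isUnit_iff_ne_zero.mp ((Matrix.isUnit_iff_isUnit_det _).mp (hu s))
  have hadj : Differentiable ℝ fun s => (F s).adjugate i j := by
    have h2 : (fun s => (F s).adjugate i j)
        = fun s => ((F s).updateRow j (Pi.single i 1)).det := by
      funext s
      rw [Matrix.adjugate_apply]
    rw [h2]
    refine diff1_det fun k l => ?_
    simp only [Matrix.updateRow_apply]
    by_cases hk : k = j
    · simp [hk]
    · simp only [hk, if_false]
      exact hF k l
  exact ((diff1_det hF).inv hdet).mul hadj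

lemma mD_inv {n : Type*} [Fintype n] [DecidableEq n] {F : ℝ → Matrix n n ℂ} {t : ℝ}
    (hF : ∀ i j, Differentiable ℝ fun s => F s i j) (hu : ∀ s, IsUnit (F s)) :
    mD (fun s => (F s)⁻¹) t = -((F t)⁻¹ * mD F t * (F t)⁻¹) := by
  have hdetu : ∀ s, IsUnit (F s).det := fun s => (Matrix.isUnit_iff_isUnit_det _).mp (hu s)
  have hGd := diff1_inv hF hu
  have h1 : (fun s => F s * (F s)⁻¹) = fun _ => (1 : Matrix n n ℂ) :=
    funext fun s => Matrix.mul_nonsing_inv _ (hdetu s)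
  have h2 := mD_mul (t := t) hF hGd
  rw [h1, mD_const] at h2
  have h4 : F t * mD (fun s => (F s)⁻¹) t = -(mD F t * (F t)⁻¹) := by
    have h5 : mD F t * (F t)⁻¹ + F t * mD (fun s => (F s)⁻¹) t = 0 := h2.symm
    calc F t * mD (fun s => (F s)⁻¹) t
        = (mD F t * (F t)⁻¹ + F t * mD (fun s => (F s)⁻¹) t) - mD F t * (F t)⁻¹ := by abel
      _ = -(mD F t * (F t)⁻¹) := by rw [h5]; abel
  calc mD (fun s => (F s)⁻¹) t
      = (F t)⁻¹ * F t * mD (fun s => (F s)⁻¹) t := by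
        rw [Matrix.nonsing_inv_mul _ (hdetu t), one_mul]
    _ = (F t)⁻¹ * (F t * mD (fun s => (F s)⁻¹) t) := by rw [mul_assoc]
    _ = -((F t)⁻¹ * mD F t * (F t)⁻¹) := by rw [h4, mul_neg, mul_assoc]

end MD

section PD

variable {α β γ : Type*}

lemma pdσ_mul [Fintype β] {f : ℝ × ℝ → Matrix α β ℂ} {g : ℝ × ℝ → Matrix β γ ℂ} {z : ℝ × ℝ}
    (hf : ∀ i j, Differentiable ℝ fun s => f (z.1, s) i j)
    (hg : ∀ i j, Differentiable ℝ fun s => g (z.1, s) i j) :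
    pdσ (fun y => f y * g y) z = pdσ f z * g z + f z * pdσ g z :=
  mD_mul hf hg

lemma pdτ_mul [Fintype β] {f : ℝ × ℝ → Matrix α β ℂ} {g : ℝ × ℝ → Matrix β γ ℂ} {z : ℝ × ℝ}
    (hf : ∀ i j, Differentiable ℝ fun s => f (s, z.2) i j)
    (hg : ∀ i j, Differentiable ℝ fun s => g (s, z.2) i j) :
    pdτ (fun y => f y * g y) z = pdτ f z * g z + f z * pdτ g z :=
  mD_mul hf hg

lemma pdσ_sub {f g : ℝ × ℝ → Matrix α β ℂ} {z : ℝ × ℝ}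
    (hf : ∀ i j, Differentiable ℝ fun s => f (z.1, s) i j)
    (hg : ∀ i j, Differentiable ℝ fun s => g (z.1, s) i j) :
    pdσ (fun y => f y - g y) z = pdσ f z - pdσ g z :=
  mD_sub hf hg

lemma pdτ_sub {f g : ℝ × ℝ → Matrix α β ℂ} {z : ℝ × ℝ}
    (hf : ∀ i j, Differentiable ℝ fun s => f (s, z.2) i j)
    (hg : ∀ i j, Differentiable ℝ fun s => g (s, z.2) i j) :
    pdτ (fun y => f y - g y) z = pdτ f z - pdτ g z :=
  mD_sub hf hg

lemma pdτ_add {f g : ℝ × ℝ → Matrix α β ℂ} {z : ℝ × ℝ}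
    (hf : ∀ i j, Differentiable ℝ fun s => f (s, z.2) i j)
    (hg : ∀ i j, Differentiable ℝ fun s => g (s, z.2) i j) :
    pdτ (fun y => f y + g y) z = pdτ f z + pdτ g z :=
  mD_add hf hg

lemma pdσ_const (C : Matrix α β ℂ) (z : ℝ × ℝ) : pdσ (fun _ => C) z = 0 :=
  mD_const C z.2

lemma pdτ_const (C : Matrix α β ℂ) (z : ℝ × ℝ) : pdτ (fun _ => C) z = 0 :=
  mD_const C z.1

lemma pdσ_inv {n : Type*} [Fintype n] [DecidableEq n] {Ω : ℝ × ℝ → Matrix n n ℂ} {z : ℝ × ℝ}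
    (hf : ∀ i j, Differentiable ℝ fun s => Ω (z.1, s) i j) (hu : ∀ y, IsUnit (Ω y)) :
    pdσ (fun y => (Ω y)⁻¹) z = -((Ω z)⁻¹ * pdσ Ω z * (Ω z)⁻¹) :=
  mD_inv hf (fun s => hu _)

lemma pdτ_inv {n : Type*} [Fintype n] [DecidableEq n] {Ω : ℝ × ℝ → Matrix n n ℂ} {z : ℝ × ℝ}
    (hf : ∀ i j, Differentiable ℝ fun s => Ω (s, z.2) i j) (hu : ∀ y, IsUnit (Ω y)) :
    pdτ (fun y => (Ω y)⁻¹) z = -((Ω z)⁻¹ * pdτ Ω z * (Ω z)⁻¹) :=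
  mD_inv hf (fun s => hu _)

end PD

/-- **Gram-type (quasi-determinant) solutions of the ASDYM hierarchy.**
If `J⁰, K⁰` is a seed solution with common gauge potential
`A = −(∂_σ J⁰)(J⁰)⁻¹ = ∂_τ K⁰`, and `η, θ, Ω` satisfy the Cauchy matrix scheme, then
`J = (I − θΩ⁻¹Ξ⁻¹η)·J⁰` and `K = θΩ⁻¹η + K⁰` satisfy `∂_σ J = −(∂_τ K)·J`. -/
theorem asdym_gram_solutions (N M : ℕ) (hN : 1 ≤ N) (hM : 1 ≤ M)
    (Ξ Λ : Matrix (Fin N) (Fin N) ℂ)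
    (hΞΛ : spectrum ℂ Ξ ∩ spectrum ℂ Λ = ∅)
    (hΞ : IsUnit Ξ)
    (η : ℝ × ℝ → Matrix (Fin N) (Fin M) ℂ)
    (θ : ℝ × ℝ → Matrix (Fin M) (Fin N) ℂ)
    (Ω : ℝ × ℝ → Matrix (Fin N) (Fin N) ℂ)
    (A J₀ K₀ : ℝ × ℝ → Matrix (Fin M) (Fin M) ℂ)
    (hηd : ∀ i j, Differentiable ℝ fun z => η z i j)
    (hθd : ∀ i j, Differentiable ℝ fun z => θ z i j)
    (hΩd : ∀ i j, Differentiable ℝ fun z => Ω z i j)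
    (hAd : ∀ i j, Differentiable ℝ fun z => A z i j)
    (hJ₀d : ∀ i j, Differentiable ℝ fun z => J₀ z i j)
    (hK₀d : ∀ i j, Differentiable ℝ fun z => K₀ z i j)
    (hΩinv : ∀ z, IsUnit (Ω z))
    (hJ₀inv : ∀ z, IsUnit (J₀ z))
    (hseed1 : ∀ z, -(pdσ J₀ z) * (J₀ z)⁻¹ = A z)
    (hseed2 : ∀ z, A z = pdτ K₀ z)
    (hSyl : ∀ z, Ξ * Ω z - Ω z * Λ = η z * θ z)
    (hη : ∀ z, pdσ η z = Ξ * pdτ η z + η z * A z)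
    (hθ : ∀ z, pdσ θ z = pdτ θ z * Λ - A z * θ z) :
    ∀ z, pdσ (fun y =>
        ((1 : Matrix (Fin M) (Fin M) ℂ) - θ y * (Ω y)⁻¹ * Ξ⁻¹ * η y) * J₀ y) z
      = -(pdτ (fun y => θ y * (Ω y)⁻¹ * η y + K₀ y) z)
        * (((1 : Matrix (Fin M) (Fin M) ℂ) - θ z * (Ω z)⁻¹ * Ξ⁻¹ * η z) * J₀ z) := by
  intro z
  -- slice embeddings
  have embσ : Differentiable ℝ (fun s : ℝ => ((z.1, s) : ℝ × ℝ)) :=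
    (differentiable_const _).prodMk differentiable_id
  have embτ : Differentiable ℝ (fun s : ℝ => ((s, z.2) : ℝ × ℝ)) :=
    differentiable_id.prodMk (differentiable_const _)
  -- slice differentiability
  have hησs : ∀ i j, Differentiable ℝ fun s => η (z.1, s) i j := fun i j => (hηd i j).comp embσ
  have hθσs : ∀ i j, Differentiable ℝ fun s => θ (z.1, s) i j := fun i j => (hθd i j).comp embσ
  have hΩσs : ∀ i j, Differentiable ℝ fun s => Ω (z.1, s) i j := fun i j => (hΩd i j).comp embσ
  have hJ₀σs : ∀ i j, Differentiable ℝ fun s => J₀ (z.1, s) i j := fun i j => (hJ₀d i j).comp embσ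
  have hητs : ∀ i j, Differentiable ℝ fun s => η (s, z.2) i j := fun i j => (hηd i j).comp embτ
  have hθτs : ∀ i j, Differentiable ℝ fun s => θ (s, z.2) i j := fun i j => (hθd i j).comp embτ
  have hΩτs : ∀ i j, Differentiable ℝ fun s => Ω (s, z.2) i j := fun i j => (hΩd i j).comp embτ
  have hK₀τs : ∀ i j, Differentiable ℝ fun s => K₀ (s, z.2) i j := fun i j => (hK₀d i j).comp embτ
  have hGσ : ∀ i j, Differentiable ℝ fun s => (Ω (z.1, s))⁻¹ i j :=
    diff1_inv hΩσs (fun s => hΩinv _)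
  have hGτ : ∀ i j, Differentiable ℝ fun s => (Ω (s, z.2))⁻¹ i j :=
    diff1_inv hΩτs (fun s => hΩinv _)
  -- unit facts
  have hΩdet : IsUnit (Ω z).det := (Matrix.isUnit_iff_isUnit_det _).mp (hΩinv z)
  have hΞdet : IsUnit Ξ.det := (Matrix.isUnit_iff_isUnit_det _).mp hΞ
  have hJ₀det : IsUnit (J₀ z).det := (Matrix.isUnit_iff_isUnit_det _).mp (hJ₀inv z)
  -- seed relation for J₀
  have hseedσ : pdσ J₀ z = -(A z * J₀ z) := by
    have h : -(pdσ J₀ z) * (J₀ z)⁻¹ * J₀ z = A z * J₀ z := by rw [hseed1 z]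
    rw [Matrix.mul_assoc, Matrix.nonsing_inv_mul _ hJ₀det, Matrix.mul_one] at h
    exact neg_eq_iff_eq_neg.mp h
  -- differentiated Sylvester equations
  have hSylfun : (fun y => Ξ * Ω y - Ω y * Λ) = fun y => η y * θ y := funext hSyl
  have dσ2 : pdσ (fun y => Ξ * Ω y) z = pdσ (fun _ => Ξ) z * Ω z + Ξ * pdσ Ω z :=
    pdσ_mul (f := fun _ => Ξ) (g := Ω) (diff1_const Ξ) hΩσs
  rw [pdσ_const, Matrix.zero_mul, zero_add] at dσ2
  have dσ3 : pdσ (fun y => Ω y * Λ) z = pdσ Ω z * Λ + Ω z * pdσ (fun _ => Λ) z :=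
    pdσ_mul (f := Ω) (g := fun _ => Λ) hΩσs (diff1_const Λ)
  rw [pdσ_const, Matrix.mul_zero, add_zero] at dσ3
  have dσ4 : pdσ (fun y => η y * θ y) z = pdσ η z * θ z + η z * pdσ θ z :=
    pdσ_mul (f := η) (g := θ) hησs hθσs
  have dSylσ : Ξ * pdσ Ω z - pdσ Ω z * Λ = pdσ η z * θ z + η z * pdσ θ z := by
    have h : pdσ (fun y => Ξ * Ω y - Ω y * Λ) z = pdσ (fun y => η y * θ y) z := by
      rw [hSylfun]
    rw [pdσ_sub (f := fun y => Ξ * Ω y) (g := fun y => Ω y * Λ)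
      (diff1_mul (diff1_const Ξ) hΩσs) (diff1_mul hΩσs (diff1_const Λ)), dσ2, dσ3, dσ4] at h
    exact h
  have dτ2 : pdτ (fun y => Ξ * Ω y) z = pdτ (fun _ => Ξ) z * Ω z + Ξ * pdτ Ω z :=
    pdτ_mul (f := fun _ => Ξ) (g := Ω) (diff1_const Ξ) hΩτs
  rw [pdτ_const, Matrix.zero_mul, zero_add] at dτ2
  have dτ3 : pdτ (fun y => Ω y * Λ) z = pdτ Ω z * Λ + Ω z * pdτ (fun _ => Λ) z :=
    pdτ_mul (f := Ω) (g := fun _ => Λ) hΩτs (diff1_const Λ)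
  rw [pdτ_const, Matrix.mul_zero, add_zero] at dτ3
  have dτ4 : pdτ (fun y => η y * θ y) z = pdτ η z * θ z + η z * pdτ θ z :=
    pdτ_mul (f := η) (g := θ) hητs hθτs
  have dSylτ : Ξ * pdτ Ω z - pdτ Ω z * Λ = pdτ η z * θ z + η z * pdτ θ z := by
    have h : pdτ (fun y => Ξ * Ω y - Ω y * Λ) z = pdτ (fun y => η y * θ y) z := by
      rw [hSylfun]
    rw [pdτ_sub (f := fun y => Ξ * Ω y) (g := fun y => Ω y * Λ)
      (diff1_mul (diff1_const Ξ) hΩτs) (diff1_mul hΩτs (diff1_const Λ)), dτ2, dτ3, dτ4] at h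
    exact h
  -- the σ-derivative of Ω in terms of τ-derivatives
  have hΩσeq : pdσ Ω z = pdτ Ω z * Λ + pdτ η z * θ z := by
    rw [hη z, hθ z] at dSylσ
    have e : Ξ * (pdσ Ω z - (pdτ Ω z * Λ + pdτ η z * θ z))
        - (pdσ Ω z - (pdτ Ω z * Λ + pdτ η z * θ z)) * Λ
        = (Ξ * pdσ Ω z - pdσ Ω z * Λ
            - ((Ξ * pdτ η z + η z * A z) * θ z + η z * (pdτ θ z * Λ - A z * θ z)))
          - (Ξ * pdτ Ω z - pdτ Ω z * Λ - (pdτ η z * θ z + η z * pdτ θ z)) * Λ := by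
      simp only [Matrix.mul_sub, Matrix.sub_mul, Matrix.mul_add, Matrix.add_mul,
        Matrix.mul_assoc]
      abel
    rw [dSylσ, dSylτ] at e
    simp only [sub_self, Matrix.zero_mul, sub_zero] at e
    have h0 := sylvester_eq_zero Ξ Λ hΞΛ _ (sub_eq_zero.mp e)
    rwa [sub_eq_zero] at h0
  -- derivatives of the σ-side expression
  have s6 : pdσ (fun y => (Ω y)⁻¹) z = -((Ω z)⁻¹ * pdσ Ω z * (Ω z)⁻¹) := pdσ_inv hΩσs hΩinv
  have s5 : pdσ (fun y => θ y * (Ω y)⁻¹) z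
      = pdσ θ z * (Ω z)⁻¹ + θ z * pdσ (fun y => (Ω y)⁻¹) z :=
    pdσ_mul (f := θ) (g := fun y => (Ω y)⁻¹) hθσs hGσ
  have s4 : pdσ (fun y => θ y * (Ω y)⁻¹ * Ξ⁻¹) z
      = pdσ (fun y => θ y * (Ω y)⁻¹) z * Ξ⁻¹ + θ z * (Ω z)⁻¹ * pdσ (fun _ => Ξ⁻¹) z :=
    pdσ_mul (f := fun y => θ y * (Ω y)⁻¹) (g := fun _ => Ξ⁻¹)
      (diff1_mul hθσs hGσ) (diff1_const _)
  rw [pdσ_const, Matrix.mul_zero, add_zero] at s4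
  have s3 : pdσ (fun y => θ y * (Ω y)⁻¹ * Ξ⁻¹ * η y) z
      = pdσ (fun y => θ y * (Ω y)⁻¹ * Ξ⁻¹) z * η z + θ z * (Ω z)⁻¹ * Ξ⁻¹ * pdσ η z :=
    pdσ_mul (f := fun y => θ y * (Ω y)⁻¹ * Ξ⁻¹) (g := η)
      (diff1_mul (diff1_mul hθσs hGσ) (diff1_const _)) hησs
  have s2 : pdσ (fun y => (1 : Matrix (Fin M) (Fin M) ℂ) - θ y * (Ω y)⁻¹ * Ξ⁻¹ * η y) z
      = pdσ (fun _ => (1 : Matrix (Fin M) (Fin M) ℂ)) z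
        - pdσ (fun y => θ y * (Ω y)⁻¹ * Ξ⁻¹ * η y) z :=
    pdσ_sub (f := fun _ => (1 : Matrix (Fin M) (Fin M) ℂ))
      (g := fun y => θ y * (Ω y)⁻¹ * Ξ⁻¹ * η y) (diff1_const _)
      (diff1_mul (diff1_mul (diff1_mul hθσs hGσ) (diff1_const _)) hησs)
  rw [pdσ_const, zero_sub] at s2
  have s1 : pdσ (fun y => ((1 : Matrix (Fin M) (Fin M) ℂ) - θ y * (Ω y)⁻¹ * Ξ⁻¹ * η y) * J₀ y) z
      = pdσ (fun y => (1 : Matrix (Fin M) (Fin M) ℂ) - θ y * (Ω y)⁻¹ * Ξ⁻¹ * η y) z * J₀ z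
        + ((1 : Matrix (Fin M) (Fin M) ℂ) - θ z * (Ω z)⁻¹ * Ξ⁻¹ * η z) * pdσ J₀ z :=
    pdσ_mul (f := fun y => (1 : Matrix (Fin M) (Fin M) ℂ) - θ y * (Ω y)⁻¹ * Ξ⁻¹ * η y)
      (g := J₀)
      (diff1_sub (diff1_const _)
        (diff1_mul (diff1_mul (diff1_mul hθσs hGσ) (diff1_const _)) hησs)) hJ₀σs
  -- derivatives of the τ-side expression
  have t4 : pdτ (fun y => (Ω y)⁻¹) z = -((Ω z)⁻¹ * pdτ Ω z * (Ω z)⁻¹) := pdτ_inv hΩτs hΩinv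
  have t3 : pdτ (fun y => θ y * (Ω y)⁻¹) z
      = pdτ θ z * (Ω z)⁻¹ + θ z * pdτ (fun y => (Ω y)⁻¹) z :=
    pdτ_mul (f := θ) (g := fun y => (Ω y)⁻¹) hθτs hGτ
  have t2 : pdτ (fun y => θ y * (Ω y)⁻¹ * η y) z
      = pdτ (fun y => θ y * (Ω y)⁻¹) z * η z + θ z * (Ω z)⁻¹ * pdτ η z :=
    pdτ_mul (f := fun y => θ y * (Ω y)⁻¹) (g := η) (diff1_mul hθτs hGτ) hητs
  have t1 : pdτ (fun y => θ y * (Ω y)⁻¹ * η y + K₀ y) z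
      = pdτ (fun y => θ y * (Ω y)⁻¹ * η y) z + pdτ K₀ z :=
    pdτ_add (f := fun y => θ y * (Ω y)⁻¹ * η y) (g := K₀)
      (diff1_mul (diff1_mul hθτs hGτ) hητs) hK₀τs
  -- assemble
  rw [s1, s2, s3, s4, s5, s6, hseedσ, hη z, hθ z, hΩσeq, t1, t2, t3, t4, ← hseed2 z]
  -- now pure matrix algebra
  have hW1 : ∀ W : Matrix (Fin N) (Fin M) ℂ, Ω z * ((Ω z)⁻¹ * W) = W := fun W => by
    rw [← Matrix.mul_assoc, Matrix.mul_nonsing_inv _ hΩdet, Matrix.one_mul]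
  have hW2 : ∀ W : Matrix (Fin N) (Fin M) ℂ, (Ω z)⁻¹ * (Ω z * W) = W := fun W => by
    rw [← Matrix.mul_assoc, Matrix.nonsing_inv_mul _ hΩdet, Matrix.one_mul]
  have hW3 : ∀ W : Matrix (Fin N) (Fin M) ℂ, Ξ * (Ξ⁻¹ * W) = W := fun W => by
    rw [← Matrix.mul_assoc, Matrix.mul_nonsing_inv _ hΞdet, Matrix.one_mul]
  have hW4 : ∀ W : Matrix (Fin N) (Fin M) ℂ, Ξ⁻¹ * (Ξ * W) = W := fun W => by
    rw [← Matrix.mul_assoc, Matrix.nonsing_inv_mul _ hΞdet, Matrix.one_mul]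
  have key : ∀ W : Matrix (Fin M) (Fin M) ℂ, η z * (θ z * ((Ω z)⁻¹ * (Ξ⁻¹ * (η z * W))))
      = η z * W - Ω z * (Λ * ((Ω z)⁻¹ * (Ξ⁻¹ * (η z * W)))) := by
    intro W
    calc η z * (θ z * ((Ω z)⁻¹ * (Ξ⁻¹ * (η z * W))))
        = (η z * θ z) * ((Ω z)⁻¹ * (Ξ⁻¹ * (η z * W))) := by rw [Matrix.mul_assoc]
      _ = (Ξ * Ω z - Ω z * Λ) * ((Ω z)⁻¹ * (Ξ⁻¹ * (η z * W))) := by rw [hSyl z]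
      _ = η z * W - Ω z * (Λ * ((Ω z)⁻¹ * (Ξ⁻¹ * (η z * W)))) := by
          rw [Matrix.sub_mul, Matrix.mul_assoc, Matrix.mul_assoc, hW1, hW3]
  simp only [Matrix.mul_add, Matrix.add_mul, Matrix.mul_sub, Matrix.sub_mul,
    Matrix.mul_assoc, Matrix.mul_one, Matrix.one_mul, Matrix.neg_mul, Matrix.mul_neg,
    neg_neg, Matrix.mul_zero, Matrix.zero_mul, add_zero, zero_add, zero_sub, sub_zero,
    key, hW1, hW2, hW3, hW4]
  abel

end
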